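/- If a representation of the free group on two generators into SL(3,ℂ) sends both generators g₁, g₂ to matrices with a common invariant line spanned by e₁, with g₁ = A₁ the Jordan block [[1,1,0],[0,1,1],[0,0,1]] and g₂ upper triangular in the first column (entries (2,1) and (3,1) zero) and unipotent with tr(g₁g₂) = 3, then the character map evaluates to (3,3,3): tr(g₁g₂⁻¹) = tr(g₁⁻¹g₂) = tr(g₁g₂g₁⁻¹g₂⁻¹) = 3. -/

import Mathlib

open Matrix

lemma aux2 {x y : ℂ} (hs : x + y = 0) (hq : x^2 + y^2 = 0) : x = 0 ∧ y = 0 := by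
  have hx : x ^ 2 = 0 := by linear_combination hq/2 + (x - y)/2 * hs
  have hx0 : x = 0 := pow_eq_zero_iff (n := 2) (by norm_num) |>.1 hx
  exact ⟨hx0, by linear_combination hs - hx0⟩

lemma aux3 {u v w : ℂ} (h1 : u + v + w = 0) (h2 : u^2 + v^2 + w^2 = 0)
    (h3 : u * v * w = 0) : u = 0 ∧ v = 0 ∧ w = 0 := by
  rcases mul_eq_zero.1 h3 with h0 | h0
  · rcases mul_eq_zero.1 h0 with h0 | h0
    · obtain ⟨hv, hw⟩ := aux2 (x := v) (y := w) (by linear_combination h1 - h0)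
        (by linear_combination h2 - (u + 0) * h0)
      exact ⟨h0, hv, hw⟩
    · obtain ⟨hu, hw⟩ := aux2 (x := u) (y := w) (by linear_combination h1 - h0)
        (by linear_combination h2 - (v + 0) * h0)
      exact ⟨hu, h0, hw⟩
  · obtain ⟨hu, hv⟩ := aux2 (x := u) (y := v) (by linear_combination h1 - h0)
      (by linear_combination h2 - (w + 0) * h0)
    exact ⟨hu, hv, h0⟩

theorem stmt_18 (g₂ : Matrix (Fin 3) (Fin 3) ℂ)
    (hdet : g₂.det = 1) (htr : g₂.trace = 3) (htr2 : (g₂ * g₂).trace = 3)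
    (h21 : g₂ 1 0 = 0) (h31 : g₂ 2 0 = 0)
    (hA : ((!![(1:ℂ),1,0; 0,1,1; 0,0,1]) * g₂).trace = 3) :
    let A₁ : Matrix (Fin 3) (Fin 3) ℂ := !![1,1,0; 0,1,1; 0,0,1]
    (A₁ * g₂⁻¹).trace = 3 ∧ (A₁⁻¹ * g₂).trace = 3 ∧
      (A₁ * g₂ * A₁⁻¹ * g₂⁻¹).trace = 3 := by
  intro A₁
  rw [Matrix.trace_fin_three] at htr htr2 hA
  rw [Matrix.det_fin_three] at hdet
  simp [Matrix.mul_apply, Fin.sum_univ_three, h21, h31] at htr2 hA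
  rw [h21, h31] at hdet
  have hf : g₂ 2 1 = 0 := by linear_combination hA - htr
  rw [hf] at hdet htr2
  have h1 : g₂ 0 0 + g₂ 1 1 + g₂ 2 2 = 3 := by linear_combination htr
  have h2 : (g₂ 0 0)^2 + (g₂ 1 1)^2 + (g₂ 2 2)^2 = 3 := by linear_combination htr2
  have h3 : g₂ 0 0 * g₂ 1 1 * g₂ 2 2 = 1 := by linear_combination hdet
  obtain ⟨hu, hv, hw⟩ := aux3 (u := g₂ 0 0 - 1) (v := g₂ 1 1 - 1) (w := g₂ 2 2 - 1)
    (by linear_combination h1) (by linear_combination h2 - 2 * h1)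
    (by linear_combination h3 + h2/2 - ((g₂ 0 0 + g₂ 1 1 + g₂ 2 2 + 1)/2) * h1)
  have ha1 : g₂ 0 0 = 1 := by linear_combination hu
  have hd1 : g₂ 1 1 = 1 := by linear_combination hv
  have hh1 : g₂ 2 2 = 1 := by linear_combination hw
  set b := g₂ 0 1 with hb
  set c := g₂ 0 2 with hc
  set e := g₂ 1 2 with he
  have hg : g₂ = !![1, b, c; 0, 1, e; 0, 0, 1] := by
    rw [Matrix.eta_fin_three g₂, h21, h31, ha1, hd1, hh1, hf, ← hb, ← hc, ← he]
  have hinv : g₂⁻¹ = !![1, -b, b*e - c; 0, 1, -e; 0, 0, 1] := by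
    rw [hg]
    apply Matrix.inv_eq_right_inv
    rw [Matrix.mul_fin_three, Matrix.one_fin_three]
    congr 1 <;> ring_nf
  have hAinv : A₁⁻¹ = !![1, -1, 1; 0, 1, -1; 0, 0, 1] := by
    apply Matrix.inv_eq_right_inv
    show (!![(1:ℂ),1,0; 0,1,1; 0,0,1] : Matrix (Fin 3) (Fin 3) ℂ) * _ = 1
    rw [Matrix.mul_fin_three, Matrix.one_fin_three]
    norm_num
  refine ⟨?_, ?_, ?_⟩ <;>
    simp only [show A₁ = !![(1:ℂ),1,0; 0,1,1; 0,0,1] from rfl, hinv,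
      show (!![(1:ℂ),1,0; 0,1,1; 0,0,1])⁻¹ = !![1, -1, 1; 0, 1, -1; 0, 0, 1] from hAinv] <;>
    simp only [hg, Matrix.mul_fin_three, Matrix.trace_fin_three_of] <;> ring
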